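/- Consider the factor graph whose variable nodes are V = {1,…,N} and whose function nodes are all subsets e ⊆ V with 2 ≤ |e| ≤ D, with an arbitrary observation A_e ∈ {0,1} for each such e and normalizing constants κ_{|e|} > 0 satisfying c·d·(d−1)/2 < N·κ_d for all 2 ≤ d ≤ D. Define the sum-product updates: for each function node e and each i ∈ e, the hyperedge-to-node message is q̂_{e→i}(a) ∝ Σ_{(t_j)_{j∈e∖{i}}∈{1,…,K}^{e∖{i}}} (π_e/κ_{|e|})^{A_e} (1 − π_e/κ_{|e|})^{1−A_e} ∏_{j∈e∖{i}} q_{j→e}(t_j) (with t_i = a and π_e = (1/N)Σ_{{r,s}⊆e,r≠s} c_{t_r t_s}), the node-to-hyperedge message is q_{i→e}(a) ∝ n_a ∏_{f ∋ i, f ≠ e} q̂_{f→i}(a), and the marginal is q_i(a) ∝ n_a ∏_{f ∋ i} q̂_{f→i}(a), each normalized to sum to 1 over a ∈ {1,…,K}. If additionally every n_a > 0 and Σ_{b=1}^K c_{ab} n_b = c > 0 for every a, then the messages q_{i→e}(a) = n_a and q̂_{e→i}(a) = 1/K for all incident pairs (i,e) form an exact fixed point of these updates, and the resulting marginals are q_i(a)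 = n_a. -/

import Mathlib

open Finset

/-- The unnormalized sum-product hyperedge-to-node update
`q̂_{e→i}(a) ∝ Σ_{(t_j)_{j∈e∖{i}}} (π_e/κ_{|e|})^{A_e} (1 − π_e/κ_{|e|})^{1−A_e}
∏_{j∈e∖{i}} q_{j→e}(t_j)`, where `t_i = a` and
`π_e = (1/N) Σ_{{r,s}⊆e, r≠s} c_{t_r t_s}`. -/
noncomputable def hatUpdate {N K : ℕ} (c : Fin K → Fin K → ℝ) (κ : ℕ → ℝ)
    (A : Finset (Fin N) → ℕ) (q : Fin N → Finset (Fin N) → Fin K → ℝ)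
    (e : Finset (Fin N)) (i : Fin N) (a : Fin K) : ℝ :=
  ∑ t : {x // x ∈ e.erase i} → Fin K,
    (let π : ℝ := (1 / (N : ℝ)) *
        ∑ rs ∈ (e ×ˢ e).filter fun rs => rs.1 < rs.2,
          c (if h : rs.1 ∈ e.erase i then t ⟨rs.1, h⟩ else a)
            (if h : rs.2 ∈ e.erase i then t ⟨rs.2, h⟩ else a)
    (π / κ e.card) ^ (A e) * (1 - π / κ e.card) ^ (1 - A e))
      * ∏ j : {x // x ∈ e.erase i}, q j.1 e (t j)


section helpers
variable {K : ℕ} {ι : Type*} [Fintype ι] [DecidableEq ι] {n : Fin K → ℝ}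

lemma sum_prod_eq (w : ι → Fin K → ℝ) :
    ∑ t : ι → Fin K, ∏ j, w j (t j) = ∏ j, ∑ b, w j b :=
  (Fintype.prod_sum w).symm

lemma prob_total (hn1 : ∑ a, n a = 1) :
    ∑ t : ι → Fin K, ∏ j, n (t j) = 1 := by
  rw [sum_prod_eq (fun _ b => n b)]
  simp [hn1]

lemma two_point_prod (j0 j1 : ι) (hne : j0 ≠ j1) (F G : ι → ℝ) :
    ∏ j, (if j = j0 then F j else if j = j1 then G j else 1) = F j0 * G j1 := by
  rw [← Finset.mul_prod_erase univ _ (mem_univ j0), if_pos rfl]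
  congr 1
  rw [← Finset.mul_prod_erase (univ.erase j0) _
      (Finset.mem_erase.2 ⟨hne.symm, mem_univ j1⟩)]
  rw [if_neg hne.symm, if_pos rfl]
  rw [Finset.prod_eq_one (fun j hj => ?_), mul_one]
  have h1 : j ≠ j1 := Finset.ne_of_mem_erase hj
  have h0 : j ≠ j0 := Finset.ne_of_mem_erase (Finset.mem_of_mem_erase hj)
  rw [if_neg h0, if_neg h1]

lemma single_marginal (hn1 : ∑ a, n a = 1) (j0 : ι) (g : Fin K → ℝ) :
    ∑ t : ι → Fin K, g (t j0) * ∏ j, n (t j) = ∑ b, g b * n b := by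
  have h1 : ∀ t : ι → Fin K, g (t j0) * ∏ j, n (t j)
      = ∏ j, (if j = j0 then g (t j) * n (t j) else n (t j)) := by
    intro t
    conv_rhs => rw [← Finset.mul_prod_erase univ _ (mem_univ j0)]
    rw [if_pos rfl, Finset.prod_congr rfl
      (fun j hj => if_neg (Finset.ne_of_mem_erase hj))]
    conv_lhs => rw [← Finset.mul_prod_erase univ (fun j => n (t j)) (mem_univ j0)]
    ring
  simp_rw [h1]
  rw [sum_prod_eq (fun j b => if j = j0 then g b * n b else n b)]
  have h2 : ∀ j : ι, (∑ b, if j = j0 then g b * n b else n b)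
      = if j = j0 then ∑ b, g b * n b else 1 := by
    intro j; split <;> simp [hn1]
  simp_rw [h2]
  rw [Finset.prod_ite_eq' univ j0 (fun _ => ∑ b, g b * n b)]
  simp

lemma pair_marginal (hn1 : ∑ a, n a = 1) (j0 j1 : ι) (hne : j0 ≠ j1)
    (f0 f1 : Fin K → ℝ) :
    ∑ t : ι → Fin K, f0 (t j0) * f1 (t j1) * ∏ j, n (t j)
      = (∑ b, f0 b * n b) * (∑ b, f1 b * n b) := by
  have h1 : ∀ t : ι → Fin K, f0 (t j0) * f1 (t j1) * ∏ j, n (t j)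
      = ∏ j, ((if j = j0 then f0 (t j) else if j = j1 then f1 (t j) else 1) * n (t j)) := by
    intro t
    rw [Finset.prod_mul_distrib,
      two_point_prod j0 j1 hne (fun j => f0 (t j)) (fun j => f1 (t j))]
  simp_rw [h1]
  rw [sum_prod_eq (fun j b => (if j = j0 then f0 b else if j = j1 then f1 b else 1) * n b)]
  have h2 : ∀ j : ι, (∑ b, (if j = j0 then f0 b else if j = j1 then f1 b else 1) * n b)
      = if j = j0 then ∑ b, f0 b * n b else if j = j1 then ∑ b, f1 b * n b else 1 := by
    intro j; split_ifs <;> simp [hn1]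
  simp_rw [h2]
  exact two_point_prod j0 j1 hne (fun _ => ∑ b, f0 b * n b) (fun _ => ∑ b, f1 b * n b)

lemma double_marginal (hn1 : ∑ a, n a = 1) (j0 j1 : ι) (hne : j0 ≠ j1)
    (g : Fin K → Fin K → ℝ) :
    ∑ t : ι → Fin K, g (t j0) (t j1) * ∏ j, n (t j)
      = ∑ b, (∑ b', g b b' * n b') * n b := by
  have h1 : ∀ t : ι → Fin K, g (t j0) (t j1) * ∏ j, n (t j)
      = ∑ b, (if t j0 = b then (1:ℝ) else 0) * g b (t j1) * ∏ j, n (t j) := by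
    intro t
    rw [Finset.sum_eq_single (t j0)]
    · simp
    · intro b _ hb; simp [Ne.symm hb]
    · simp
  simp_rw [h1]
  rw [Finset.sum_comm]
  have h3 : ∀ b : Fin K,
      (∑ t : ι → Fin K, (if t j0 = b then (1:ℝ) else 0) * g b (t j1) * ∏ j, n (t j))
      = (∑ b', g b b' * n b') * n b := by
    intro b
    rw [pair_marginal hn1 j0 j1 hne (fun x => if x = b then (1:ℝ) else 0) (g b)]
    simp [Finset.sum_ite_eq', mul_comm]
  simp_rw [h3]

end helpers

/-- On the factor graph with variable nodes `V = Fin N` and function nodes all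
subsets `e` with `2 ≤ |e| ≤ D`, with arbitrary observations `A_e ∈ {0,1}` and normalizing
constants `κ_d > 0` with `c·d·(d−1)/2 < N·κ_d`, if `n_a > 0` for all `a` and
`Σ_b c_{ab} n_b = c > 0` for every `a`, then the messages `q_{i→e}(a) = n_a`,
`q̂_{e→i}(a) = 1/K` form an exact fixed point of the (normalized) sum-product updates, and the
resulting marginals are `q_i(a) = n_a`. -/
theorem constant_messages_fixed_point {N K D : ℕ} (hK : 1 ≤ K) (hD : 2 ≤ D) (hDN : D ≤ N)
    (c : Fin K → Fin K → ℝ) (hcsym : ∀ a b, c a b = c b a) (hcnn : ∀ a b, 0 ≤ c a b)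
    (n : Fin K → ℝ) (hn : ∀ a, 0 < n a) (hn1 : ∑ a, n a = 1)
    (cbar : ℝ) (hcbar : 0 < cbar) (hdeg : ∀ a, ∑ b, c a b * n b = cbar)
    (κ : ℕ → ℝ) (hκpos : ∀ d, 2 ≤ d → d ≤ D → 0 < κ d)
    (hκ : ∀ d : ℕ, 2 ≤ d → d ≤ D → cbar * (d : ℝ) * ((d : ℝ) - 1) / 2 < (N : ℝ) * κ d)
    (A : Finset (Fin N) → ℕ) (hA : ∀ e, A e ≤ 1) :
    ∀ e ∈ (univ : Finset (Finset (Fin N))).filter fun e => 2 ≤ e.card ∧ e.card ≤ D,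
      ∀ i ∈ e, ∀ a : Fin K,
        -- the normalized hyperedge-to-node update returns the message `1/K`
        (hatUpdate c κ A (fun _ _ b => n b) e i a
            / ∑ b, hatUpdate c κ A (fun _ _ b => n b) e i b = 1 / (K : ℝ))
        ∧
        -- the normalized node-to-hyperedge update returns the message `n a`
        ((n a * ∏ f ∈ (univ : Finset (Finset (Fin N))).filter
              (fun f => (2 ≤ f.card ∧ f.card ≤ D) ∧ i ∈ f ∧ f ≠ e), (1 / (K : ℝ)))
            / ∑ b, n b * ∏ f ∈ (univ : Finset (Finset (Fin N))).filter
              (fun f => (2 ≤ f.card ∧ f.card ≤ D) ∧ i ∈ f ∧ f ≠ e), (1 / (K : ℝ))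
          = n a)
        ∧
        -- the resulting normalized marginal is `n a`
        ((n a * ∏ f ∈ (univ : Finset (Finset (Fin N))).filter
              (fun f => (2 ≤ f.card ∧ f.card ≤ D) ∧ i ∈ f), (1 / (K : ℝ)))
            / ∑ b, n b * ∏ f ∈ (univ : Finset (Finset (Fin N))).filter
              (fun f => (2 ≤ f.card ∧ f.card ≤ D) ∧ i ∈ f), (1 / (K : ℝ))
          = n a) := by
  intro e he i hi a
  rw [Finset.mem_filter] at he
  obtain ⟨-, hd2, hdD⟩ := he
  have hKne : ((K : ℝ)) ≠ 0 := Nat.cast_ne_zero.mpr (by omega)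
  have hnorm : ∀ (S : Finset (Finset (Fin N))),
      (n a * ∏ _f ∈ S, (1 / (K : ℝ))) / (∑ b, n b * ∏ _f ∈ S, (1 / (K : ℝ))) = n a := by
    intro S
    have hP : (∏ _f ∈ S, (1 / (K : ℝ))) ≠ 0 := by
      rw [Finset.prod_const]; exact pow_ne_zero _ (one_div_ne_zero hKne)
    rw [← Finset.sum_mul, hn1, one_mul, mul_div_assoc, div_self hP, mul_one]
  refine ⟨?_, hnorm _, hnorm _⟩
  -- setup
  have hNpos : (0 : ℝ) < N := by
    have : 0 < N := lt_of_lt_of_le (by omega) hDN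
    exact_mod_cast this
  have hκd : 0 < κ e.card := hκpos _ hd2 hdD
  have hd2R : (2 : ℝ) ≤ (e.card : ℝ) := by exact_mod_cast hd2
  -- cardinality of the set of ordered pairs with first < second
  have hcard2 : 2 * ((e ×ˢ e).filter fun rs => rs.1 < rs.2).card
      = e.card * e.card - e.card := by
    have hQ : ((e ×ˢ e).filter fun rs => rs.2 < rs.1).card
        = ((e ×ˢ e).filter fun rs => rs.1 < rs.2).card := by
      apply Finset.card_nbij' Prod.swap Prod.swap
      · intro rs h
        simp only [Finset.mem_coe, Finset.mem_filter, Finset.mem_product] at *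
        exact ⟨⟨h.1.2, h.1.1⟩, h.2⟩
      · intro rs h
        simp only [Finset.mem_coe, Finset.mem_filter, Finset.mem_product] at *
        exact ⟨⟨h.1.2, h.1.1⟩, h.2⟩
      · intro rs _; simp
      · intro rs _; simp
    have hdisj : Disjoint ((e ×ˢ e).filter fun rs => rs.1 < rs.2)
        ((e ×ˢ e).filter fun rs => rs.2 < rs.1) := by
      rw [Finset.disjoint_left]
      intro rs h1 h2
      simp only [Finset.mem_filter] at h1 h2
      exact absurd h1.2 (not_lt.2 h2.2.le)
    have hunion : ((e ×ˢ e).filter fun rs => rs.1 < rs.2)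
        ∪ ((e ×ˢ e).filter fun rs => rs.2 < rs.1) = e.offDiag := by
      rw [← Finset.filter_or]
      ext rs
      simp only [Finset.mem_filter, Finset.mem_offDiag, Finset.mem_product]
      rw [lt_or_lt_iff_ne, and_assoc]
    have hcu := Finset.card_union_of_disjoint hdisj
    rw [hunion, Finset.offDiag_card, hQ] at hcu
    omega
  have hcardP : ((((e ×ˢ e).filter fun rs => rs.1 < rs.2).card : ℝ))
      = (e.card : ℝ) * ((e.card : ℝ) - 1) / 2 := by
    have hle : e.card ≤ e.card * e.card := Nat.le_mul_of_pos_left _ (by omega)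
    have h2 : (2 : ℝ) * (((e ×ˢ e).filter fun rs => rs.1 < rs.2).card : ℝ)
        = (e.card : ℝ) * (e.card : ℝ) - (e.card : ℝ) := by
      rw [← Nat.cast_ofNat, ← Nat.cast_mul, hcard2, Nat.cast_sub hle, Nat.cast_mul]
    linarith
  -- pair sums
  have hpair : ∀ (b : Fin K), ∀ rs ∈ (e ×ˢ e).filter fun rs => rs.1 < rs.2,
      (∑ t : {x // x ∈ e.erase i} → Fin K,
        c (if h : rs.1 ∈ e.erase i then t ⟨rs.1, h⟩ else b)
          (if h : rs.2 ∈ e.erase i then t ⟨rs.2, h⟩ else b) * ∏ j, n (t j)) = cbar := by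
    intro b rs hrs
    rw [Finset.mem_filter, Finset.mem_product] at hrs
    obtain ⟨⟨h1e, h2e⟩, hlt⟩ := hrs
    have hne12 : rs.1 ≠ rs.2 := ne_of_lt hlt
    by_cases h1 : rs.1 = i
    · have h2m : rs.2 ∈ e.erase i :=
        Finset.mem_erase.2 ⟨by rw [← h1]; exact hne12.symm, h2e⟩
      have h1m : rs.1 ∉ e.erase i := by simp [h1]
      rw [Finset.sum_congr rfl (fun t _ => by rw [dif_neg h1m, dif_pos h2m])]
      exact (single_marginal (ι := {x // x ∈ e.erase i}) hn1 ⟨rs.2, h2m⟩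
        (fun x => c b x)).trans (hdeg b)
    · by_cases h2 : rs.2 = i
      · have h1m : rs.1 ∈ e.erase i := Finset.mem_erase.2 ⟨h1, h1e⟩
        have h2m : rs.2 ∉ e.erase i := by simp [h2]
        rw [Finset.sum_congr rfl (fun t _ => by rw [dif_pos h1m, dif_neg h2m])]
        exact (single_marginal (ι := {x // x ∈ e.erase i}) hn1 ⟨rs.1, h1m⟩
          (fun x => c x b)).trans
          ((Finset.sum_congr rfl (fun x _ => by rw [hcsym x b])).trans (hdeg b))
      · have h1m : rs.1 ∈ e.erase i := Finset.mem_erase.2 ⟨h1, h1e⟩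
        have h2m : rs.2 ∈ e.erase i := Finset.mem_erase.2 ⟨h2, h2e⟩
        have hnem : (⟨rs.1, h1m⟩ : {x // x ∈ e.erase i}) ≠ ⟨rs.2, h2m⟩ :=
          fun h => hne12 (congrArg Subtype.val h)
        rw [Finset.sum_congr rfl (fun t _ => by rw [dif_pos h1m, dif_pos h2m])]
        refine (double_marginal (ι := {x // x ∈ e.erase i}) hn1 ⟨rs.1, h1m⟩ ⟨rs.2, h2m⟩ hnem c).trans ?_
        simp only [hdeg]
        rw [← Finset.mul_sum, hn1, mul_one]
  have hT : ∀ b : Fin K, (∑ t : {x // x ∈ e.erase i} → Fin K,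
      (∑ rs ∈ (e ×ˢ e).filter fun rs => rs.1 < rs.2,
        c (if h : rs.1 ∈ e.erase i then t ⟨rs.1, h⟩ else b)
          (if h : rs.2 ∈ e.erase i then t ⟨rs.2, h⟩ else b)) * ∏ j, n (t j))
      = (((e ×ˢ e).filter fun rs => rs.1 < rs.2).card : ℝ) * cbar := by
    intro b
    simp_rw [Finset.sum_mul]
    rw [Finset.sum_comm]
    rw [Finset.sum_congr rfl (hpair b), Finset.sum_const, nsmul_eq_mul]
  -- the value of hatUpdate is constant
  have hhat : ∀ b : Fin K, hatUpdate c κ A (fun _ _ x => n x) e i b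
      = (if A e = 1 then cbar * (e.card : ℝ) * ((e.card : ℝ) - 1) / 2 / ((N : ℝ) * κ e.card)
         else 1 - cbar * (e.card : ℝ) * ((e.card : ℝ) - 1) / 2 / ((N : ℝ) * κ e.card)) := by
    intro b
    have hfact : ∀ x y : ℝ, (1 / (N : ℝ)) * x / κ e.card * y
        = 1 / ((N : ℝ) * κ e.card) * (x * y) := by
      intro x y; field_simp
    rcases Nat.le_one_iff_eq_zero_or_eq_one.mp (hA e) with h | h
    · rw [if_neg (by omega)]
      unfold hatUpdate
      simp only [h, pow_zero, one_mul, Nat.sub_zero, pow_one]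
      simp_rw [sub_mul, one_mul, hfact]
      rw [Finset.sum_sub_distrib, prob_total hn1, ← Finset.mul_sum, hT b, hcardP]
      ring
    · rw [if_pos h]
      unfold hatUpdate
      simp only [h, pow_one, Nat.sub_self, pow_zero, mul_one]
      simp_rw [hfact]
      rw [← Finset.mul_sum, hT b, hcardP]
      ring
  -- conclude
  have hvlt : cbar * (e.card : ℝ) * ((e.card : ℝ) - 1) / 2 / ((N : ℝ) * κ e.card) < 1 := by
    rw [div_lt_one (mul_pos hNpos hκd)]
    exact hκ e.card hd2 hdD
  have hvpos' : 0 < cbar * (e.card : ℝ) * ((e.card : ℝ) - 1) / 2 / ((N : ℝ) * κ e.card) := by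
    apply div_pos _ (mul_pos hNpos hκd)
    apply div_pos _ (by norm_num : (0:ℝ) < 2)
    apply mul_pos (mul_pos hcbar (by linarith)) (by linarith)
  have hvpos : 0 < (if A e = 1 then cbar * (e.card : ℝ) * ((e.card : ℝ) - 1) / 2 / ((N : ℝ) * κ e.card)
         else 1 - cbar * (e.card : ℝ) * ((e.card : ℝ) - 1) / 2 / ((N : ℝ) * κ e.card)) := by
    split
    · exact hvpos'
    · linarith
  rw [hhat a, Finset.sum_congr rfl (fun b _ => hhat b), Finset.sum_const,
    Finset.card_univ, Fintype.card_fin, nsmul_eq_mul, mul_comm ((K : ℝ)),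
    div_mul_eq_div_mul_one_div, div_self hvpos.ne', one_mul]
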